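/- Let σ ⊂ 𝕋 be measurable, partitioned into disjoint measurable sets τ_n (n ∈ ℕ) with σ = ⋃_n τ_n. Let C > 0, and let ξ_n > 0 with Σ_n ξ_n² < ∞. Let η_n, φ_n, ψ_n ∈ L²(σ) with |η_n| ≤ 1 on τ_n, |η_n| ≤ ξ_n on σ∖τ_n, and |φ_n| ≤ C|ψ_n| a.e. on σ. For each t > 0 and n, let ψ_{n,t} ∈ L²(σ) with |ψ_n| ≤ |ψ_{n,t}| a.e. and ‖ψ_n/ψ_{n,t} − 1‖_{L²(σ)} → 0 as t → 0 for each n. Define α_t = Σ_n η_n² φ_n/ψ_{n,t} and α = Σ_n η_n² φ_n/ψ_n. Then sup_{t>0} ‖α_t‖_{L^∞(σ)} < ∞ and ‖α_t − α‖_{L²(σ)} → 0 as t → 0. -/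

import Mathlib

open MeasureTheory Filter Topology

private lemma aux_norm_div_le {C : ℝ} (hC : 0 ≤ C) {a b w : ℂ}
    (h1 : ‖a‖ ≤ C * ‖b‖) (h2 : ‖b‖ ≤ ‖w‖) : ‖a / w‖ ≤ C := by
  rcases eq_or_ne w 0 with rfl | hw
  · simpa [div_zero] using hC
  · rw [norm_div, div_le_iff₀ (norm_pos_iff.mpr hw)]
    calc ‖a‖ ≤ C * ‖b‖ := h1
      _ ≤ C * ‖w‖ := mul_le_mul_of_nonneg_left h2 hC

private lemma r_le_two {g w : ℂ} (h : ‖g‖ ≤ ‖w‖) : ‖g / w - 1‖ ≤ 2 := by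
  refine (norm_sub_le _ _).trans ?_
  rw [norm_one]
  have : ‖g / w‖ ≤ 1 := aux_norm_div_le zero_le_one (by simpa using h.trans (le_refl _)) h
  linarith

private lemma div_sub_div_eq' {a b w : ℂ} (h : b = 0 → a = 0) :
    a / w - a / b = a / b * (b / w - 1) := by
  rcases eq_or_ne b 0 with rfl | hb
  · simp [h rfl]
  rcases eq_or_ne w 0 with rfl | hw
  · simp
  · field_simp

private lemma cs_tsum' {x r : ℕ → ℝ} (hx : ∀ n, 0 ≤ x n) (hr : ∀ n, 0 ≤ r n)
    (h1 : Summable x) (h2 : Summable fun n => x n * r n ^ 2) :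
    (∑' n, x n * r n) ^ 2 ≤ (∑' n, x n) * ∑' n, x n * r n ^ 2 := by
  have hxr : Summable fun n => x n * r n := by
    refine Summable.of_nonneg_of_le (fun n => mul_nonneg (hx n) (hr n)) (fun n => ?_)
      ((h1.add h2).mul_left (1 / 2))
    have h0 := sq_nonneg (r n - 1)
    nlinarith [hx n, mul_nonneg (hx n) h0]
  have key : ∑' n, x n * r n ≤
      Real.sqrt (∑' n, x n) * Real.sqrt (∑' n, x n * r n ^ 2) := by
    refine Summable.tsum_le_of_sum_le hxr fun s => ?_
    have h := Real.sum_mul_le_sqrt_mul_sqrt s (fun n => Real.sqrt (x n))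
      (fun n => Real.sqrt (x n) * r n)
    have e1 : ∀ i ∈ s, Real.sqrt (x i) * (Real.sqrt (x i) * r i) = x i * r i := fun i _ => by
      rw [← mul_assoc, Real.mul_self_sqrt (hx i)]
    have e2 : ∀ i ∈ s, Real.sqrt (x i) ^ 2 = x i := fun i _ => Real.sq_sqrt (hx i)
    have e3 : ∀ i ∈ s, (Real.sqrt (x i) * r i) ^ 2 = x i * r i ^ 2 := fun i _ => by
      rw [mul_pow, Real.sq_sqrt (hx i)]
    rw [Finset.sum_congr rfl e1, Finset.sum_congr rfl e2, Finset.sum_congr rfl e3] at h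
    refine h.trans ?_
    have hs1 : ∑ i ∈ s, x i ≤ ∑' n, x n := Summable.sum_le_tsum s (fun n _ => hx n) h1
    have hs2 : ∑ i ∈ s, x i * r i ^ 2 ≤ ∑' n, x n * r n ^ 2 :=
      Summable.sum_le_tsum s (fun n _ => mul_nonneg (hx n) (sq_nonneg _)) h2
    exact mul_le_mul (Real.sqrt_le_sqrt hs1) (Real.sqrt_le_sqrt hs2) (Real.sqrt_nonneg _)
      (Real.sqrt_nonneg _)
  calc (∑' n, x n * r n) ^ 2
      ≤ (Real.sqrt (∑' n, x n) * Real.sqrt (∑' n, x n * r n ^ 2)) ^ 2 :=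
        pow_le_pow_left₀ (tsum_nonneg fun n => mul_nonneg (hx n) (hr n)) key 2
    _ = _ := by
        rw [mul_pow, Real.sq_sqrt (tsum_nonneg fun n => hx n),
          Real.sq_sqrt (tsum_nonneg fun n => mul_nonneg (hx n) (sq_nonneg _))]

private lemma aux_ptwise {C : ℝ} (hC : 0 ≤ C) (ξ : ℕ → ℝ) (hξ2 : Summable fun n => ξ n ^ 2)
    (N : ℕ) (e f g w : ℕ → ℂ)
    (he1 : ‖e N‖ ≤ 1) (he2 : ∀ n, n ≠ N → ‖e n‖ ≤ ξ n)
    (hfg : ∀ n, ‖f n‖ ≤ C * ‖g n‖) (hgw : ∀ n, ‖g n‖ ≤ ‖w n‖) :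
    Summable (fun n => e n ^ 2 * (f n / w n)) ∧
      ‖∑' n, e n ^ 2 * (f n / w n)‖ ≤ C * (1 + ∑' n, ξ n ^ 2) ∧
      Summable (fun n => ‖e n‖ ^ 2) ∧ (∑' n, ‖e n‖ ^ 2) ≤ 1 + ∑' n, ξ n ^ 2 := by
  have hfin : Summable (fun n => if n = N then (1 : ℝ) else 0) :=
    summable_of_ne_finset_zero (s := {N}) (fun n hn => by
      simp only [Finset.mem_singleton] at hn; simp [hn])
  have hbd : ∀ n, ‖e n‖ ^ 2 ≤ (if n = N then (1 : ℝ) else 0) + ξ n ^ 2 := by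
    intro n
    by_cases hn : n = N
    · subst hn
      rw [if_pos rfl]
      nlinarith [norm_nonneg (e n), sq_nonneg (ξ n), he1]
    · simp only [if_neg hn, zero_add]
      exact pow_le_pow_left₀ (norm_nonneg _) (he2 n hn) 2
  have hbsum : Summable (fun n => (if n = N then (1 : ℝ) else 0) + ξ n ^ 2) := hfin.add hξ2
  have hbtsum : ∑' n, ((if n = N then (1 : ℝ) else 0) + ξ n ^ 2) = 1 + ∑' n, ξ n ^ 2 := by
    rw [Summable.tsum_add hfin hξ2, tsum_ite_eq]
  have hesum : Summable (fun n => ‖e n‖ ^ 2) :=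
    Summable.of_nonneg_of_le (fun n => sq_nonneg _) hbd hbsum
  have hetsum : (∑' n, ‖e n‖ ^ 2) ≤ 1 + ∑' n, ξ n ^ 2 := by
    rw [← hbtsum]; exact Summable.tsum_le_tsum hbd hesum hbsum
  have hq : ∀ n, ‖f n / w n‖ ≤ C := fun n => aux_norm_div_le hC (hfg n) (hgw n)
  have hterm : ∀ n, ‖e n ^ 2 * (f n / w n)‖ ≤ ‖e n‖ ^ 2 * C := by
    intro n
    rw [norm_mul, norm_pow]
    exact mul_le_mul_of_nonneg_left (hq n) (sq_nonneg _)
  have hnsum : Summable (fun n => ‖e n ^ 2 * (f n / w n)‖) :=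
    Summable.of_nonneg_of_le (fun n => norm_nonneg _) hterm (hesum.mul_right C)
  have hsum : Summable (fun n => e n ^ 2 * (f n / w n)) := hnsum.of_norm
  refine ⟨hsum, ?_, hesum, hetsum⟩
  calc ‖∑' n, e n ^ 2 * (f n / w n)‖ ≤ ∑' n, ‖e n ^ 2 * (f n / w n)‖ :=
        norm_tsum_le_tsum_norm hnsum
    _ ≤ ∑' n, ‖e n‖ ^ 2 * C := Summable.tsum_le_tsum hterm hnsum (hesum.mul_right C)
    _ = (∑' n, ‖e n‖ ^ 2) * C := tsum_mul_right
    _ ≤ (1 + ∑' n, ξ n ^ 2) * C := mul_le_mul_of_nonneg_right hetsum hC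
    _ = C * (1 + ∑' n, ξ n ^ 2) := mul_comm _ _

private lemma aux_diff {C : ℝ} (hC : 0 ≤ C) (ξ : ℕ → ℝ) (hξ2 : Summable fun n => ξ n ^ 2)
    (N : ℕ) (e f g w : ℕ → ℂ)
    (he1 : ‖e N‖ ≤ 1) (he2 : ∀ n, n ≠ N → ‖e n‖ ≤ ξ n)
    (hfg : ∀ n, ‖f n‖ ≤ C * ‖g n‖) (hgw : ∀ n, ‖g n‖ ≤ ‖w n‖) :
    Summable (fun n => ‖e n‖ ^ 2 * ‖g n / w n - 1‖ ^ 2) ∧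
      (∑' n, ‖e n‖ ^ 2 * ‖g n / w n - 1‖ ^ 2) ≤ 4 * (1 + ∑' n, ξ n ^ 2) ∧
      ‖(∑' n, e n ^ 2 * (f n / w n)) - ∑' n, e n ^ 2 * (f n / g n)‖ ^ 2 ≤
        C ^ 2 * (1 + ∑' n, ξ n ^ 2) * ∑' n, ‖e n‖ ^ 2 * ‖g n / w n - 1‖ ^ 2 := by
  obtain ⟨hsw, -, hesum, hetsum⟩ := aux_ptwise hC ξ hξ2 N e f g w he1 he2 hfg hgw
  obtain ⟨hsg, -, -, -⟩ := aux_ptwise hC ξ hξ2 N e f g g he1 he2 hfg (fun n => le_rfl)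
  have hr : ∀ n, ‖g n / w n - 1‖ ≤ 2 := fun n => r_le_two (hgw n)
  have hrsq : ∀ n, ‖g n / w n - 1‖ ^ 2 ≤ 4 := fun n => by
    nlinarith [norm_nonneg (g n / w n - 1), hr n]
  have hsum1 : Summable (fun n => ‖e n‖ ^ 2 * ‖g n / w n - 1‖ ^ 2) :=
    Summable.of_nonneg_of_le (fun n => by positivity)
      (fun n => mul_le_mul_of_nonneg_left (hrsq n) (sq_nonneg _)) (hesum.mul_right 4)
  have htsum1 : (∑' n, ‖e n‖ ^ 2 * ‖g n / w n - 1‖ ^ 2) ≤ 4 * (1 + ∑' n, ξ n ^ 2) := by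
    calc (∑' n, ‖e n‖ ^ 2 * ‖g n / w n - 1‖ ^ 2) ≤ ∑' n, ‖e n‖ ^ 2 * 4 :=
          Summable.tsum_le_tsum (fun n => mul_le_mul_of_nonneg_left (hrsq n) (sq_nonneg _)) hsum1
            (hesum.mul_right 4)
      _ = (∑' n, ‖e n‖ ^ 2) * 4 := tsum_mul_right
      _ ≤ (1 + ∑' n, ξ n ^ 2) * 4 := mul_le_mul_of_nonneg_right hetsum (by norm_num)
      _ = 4 * (1 + ∑' n, ξ n ^ 2) := mul_comm _ _
  refine ⟨hsum1, htsum1, ?_⟩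
  have hid : ∀ n, e n ^ 2 * (f n / w n) - e n ^ 2 * (f n / g n) =
      e n ^ 2 * (f n / g n * (g n / w n - 1)) := by
    intro n
    rw [← mul_sub]
    congr 1
    refine div_sub_div_eq' (fun h => ?_)
    have h0 := hfg n
    rw [h] at h0
    simp only [norm_zero, mul_zero] at h0
    exact norm_le_zero_iff.mp h0
  have hdb : ∀ n, ‖e n ^ 2 * (f n / g n * (g n / w n - 1))‖ ≤
      C * (‖e n‖ ^ 2 * ‖g n / w n - 1‖) := by
    intro n
    rw [norm_mul, norm_pow, norm_mul]
    have hq : ‖f n / g n‖ ≤ C := aux_norm_div_le hC (hfg n) le_rfl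
    calc ‖e n‖ ^ 2 * (‖f n / g n‖ * ‖g n / w n - 1‖)
        ≤ ‖e n‖ ^ 2 * (C * ‖g n / w n - 1‖) :=
          mul_le_mul_of_nonneg_left (mul_le_mul_of_nonneg_right hq (norm_nonneg _)) (sq_nonneg _)
      _ = C * (‖e n‖ ^ 2 * ‖g n / w n - 1‖) := by ring
  have hsum_er : Summable (fun n => ‖e n‖ ^ 2 * ‖g n / w n - 1‖) :=
    Summable.of_nonneg_of_le (fun n => by positivity)
      (fun n => mul_le_mul_of_nonneg_left (hr n) (sq_nonneg _)) (hesum.mul_right 2)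
  have hsumd : Summable (fun n => ‖e n ^ 2 * (f n / g n * (g n / w n - 1))‖) :=
    Summable.of_nonneg_of_le (fun n => norm_nonneg _) hdb (hsum_er.mul_left C)
  have hstep : ‖(∑' n, e n ^ 2 * (f n / w n)) - ∑' n, e n ^ 2 * (f n / g n)‖ ≤
      C * ∑' n, ‖e n‖ ^ 2 * ‖g n / w n - 1‖ := by
    rw [← Summable.tsum_sub hsw hsg]
    calc ‖∑' n, (e n ^ 2 * (f n / w n) - e n ^ 2 * (f n / g n))‖
        = ‖∑' n, e n ^ 2 * (f n / g n * (g n / w n - 1))‖ := by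
          rw [tsum_congr hid]
      _ ≤ ∑' n, ‖e n ^ 2 * (f n / g n * (g n / w n - 1))‖ := norm_tsum_le_tsum_norm hsumd
      _ ≤ ∑' n, C * (‖e n‖ ^ 2 * ‖g n / w n - 1‖) := Summable.tsum_le_tsum hdb hsumd (hsum_er.mul_left C)
      _ = C * ∑' n, ‖e n‖ ^ 2 * ‖g n / w n - 1‖ := tsum_mul_left
  have hcs := cs_tsum' (x := fun n => ‖e n‖ ^ 2) (r := fun n => ‖g n / w n - 1‖)
    (fun n => sq_nonneg _) (fun n => norm_nonneg _) hesum hsum1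
  calc ‖(∑' n, e n ^ 2 * (f n / w n)) - ∑' n, e n ^ 2 * (f n / g n)‖ ^ 2
      ≤ (C * ∑' n, ‖e n‖ ^ 2 * ‖g n / w n - 1‖) ^ 2 :=
        pow_le_pow_left₀ (norm_nonneg _) hstep 2
    _ = C ^ 2 * (∑' n, ‖e n‖ ^ 2 * ‖g n / w n - 1‖) ^ 2 := by rw [mul_pow]
    _ ≤ C ^ 2 * ((∑' n, ‖e n‖ ^ 2) * ∑' n, ‖e n‖ ^ 2 * ‖g n / w n - 1‖ ^ 2) :=
        mul_le_mul_of_nonneg_left hcs (sq_nonneg C)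
    _ ≤ C ^ 2 * ((1 + ∑' n, ξ n ^ 2) * ∑' n, ‖e n‖ ^ 2 * ‖g n / w n - 1‖ ^ 2) :=
        mul_le_mul_of_nonneg_left
          (mul_le_mul_of_nonneg_right hetsum (tsum_nonneg fun n => by positivity)) (sq_nonneg C)
    _ = C ^ 2 * (1 + ∑' n, ξ n ^ 2) * ∑' n, ‖e n‖ ^ 2 * ‖g n / w n - 1‖ ^ 2 := by ring

/-- Proposition `propalphasigma`: with `σ` abstracted as a finite
measure space `(Ω, μ)` partitioned into disjoint measurable sets `τ n`, weights
`η n` bounded by `1` on `τ n` and by `ξ n` off `τ n` with `∑ ξ n ² < ∞`,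
`|φ n| ≤ C |ψ n|` a.e., and `ψ_{n,t}` with `|ψ n| ≤ |ψ_{n,t}|` a.e. and
`‖ψ n / ψ_{n,t} − 1‖_{L²} → 0` as `t → 0`, the functions
`α_t = ∑ η n ² φ n / ψ_{n,t}` are uniformly bounded in `L^∞` and
`‖α_t − α‖_{L²} → 0` where `α = ∑ η n ² φ n / ψ n`.
(Division by `0` is interpreted as `0`, consistent with `φ n = 0` where `ψ n = 0`.) -/
theorem stmt_3 {Ω : Type*} [MeasurableSpace Ω] (μ : Measure Ω) [IsFiniteMeasure μ]
    (τ : ℕ → Set Ω) (hτm : ∀ n, MeasurableSet (τ n))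
    (hdisj : Pairwise (Function.onFun Disjoint τ)) (hcover : (⋃ n, τ n) = Set.univ)
    (C : ℝ) (hC : 0 < C) (ξ : ℕ → ℝ) (hξ : ∀ n, 0 < ξ n)
    (hξ2 : Summable fun n => ξ n ^ 2)
    (η φ ψ : ℕ → Ω → ℂ) (ψt : ℝ → ℕ → Ω → ℂ)
    (hηm : ∀ n, Measurable (η n)) (hφm : ∀ n, Measurable (φ n))
    (hψm : ∀ n, Measurable (ψ n)) (hψtm : ∀ t n, Measurable (ψt t n))
    (hη1 : ∀ n, ∀ᵐ ζ ∂μ, ζ ∈ τ n → ‖η n ζ‖ ≤ 1)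
    (hη2 : ∀ n, ∀ᵐ ζ ∂μ, ζ ∉ τ n → ‖η n ζ‖ ≤ ξ n)
    (hφψ : ∀ n, ∀ᵐ ζ ∂μ, ‖φ n ζ‖ ≤ C * ‖ψ n ζ‖)
    (hψt : ∀ t, 0 < t → ∀ n, ∀ᵐ ζ ∂μ, ‖ψ n ζ‖ ≤ ‖ψt t n ζ‖)
    (hconv : ∀ n, Tendsto (fun t => ∫ ζ, ‖ψ n ζ / ψt t n ζ - 1‖ ^ 2 ∂μ)
      (𝓝[>] (0 : ℝ)) (𝓝 0)) :
    (∃ B : ℝ, ∀ t, 0 < t →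
        ∀ᵐ ζ ∂μ, ‖∑' n, (η n ζ) ^ 2 * (φ n ζ / ψt t n ζ)‖ ≤ B) ∧
      Tendsto (fun t => ∫ ζ, ‖(∑' n, (η n ζ) ^ 2 * (φ n ζ / ψt t n ζ)) -
          (∑' n, (η n ζ) ^ 2 * (φ n ζ / ψ n ζ))‖ ^ 2 ∂μ) (𝓝[>] (0 : ℝ)) (𝓝 0) := by
  have key : ∀ t, 0 < t → ∀ᵐ ζ ∂μ,
      (Summable fun n => (η n ζ) ^ 2 * (φ n ζ / ψt t n ζ)) ∧
      (Summable fun n => (η n ζ) ^ 2 * (φ n ζ / ψ n ζ)) ∧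
      ‖∑' n, (η n ζ) ^ 2 * (φ n ζ / ψt t n ζ)‖ ≤ C * (1 + ∑' n, ξ n ^ 2) ∧
      ‖∑' n, (η n ζ) ^ 2 * (φ n ζ / ψ n ζ)‖ ≤ C * (1 + ∑' n, ξ n ^ 2) ∧
      (Summable fun n => ‖η n ζ‖ ^ 2 * ‖ψ n ζ / ψt t n ζ - 1‖ ^ 2) ∧
      (∑' n, ‖η n ζ‖ ^ 2 * ‖ψ n ζ / ψt t n ζ - 1‖ ^ 2) ≤ 4 * (1 + ∑' n, ξ n ^ 2) ∧
      ‖(∑' n, (η n ζ) ^ 2 * (φ n ζ / ψt t n ζ)) - ∑' n, (η n ζ) ^ 2 * (φ n ζ / ψ n ζ)‖ ^ 2 ≤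
        C ^ 2 * (1 + ∑' n, ξ n ^ 2) * ∑' n, ‖η n ζ‖ ^ 2 * ‖ψ n ζ / ψt t n ζ - 1‖ ^ 2 := by
    intro t ht
    filter_upwards [ae_all_iff.mpr hη1, ae_all_iff.mpr hη2, ae_all_iff.mpr hφψ,
      ae_all_iff.mpr (hψt t ht)] with ζ a1 a2 a3 a4
    obtain ⟨N, hN⟩ : ∃ N, ζ ∈ τ N := by
      have hmem : ζ ∈ ⋃ n, τ n := hcover ▸ Set.mem_univ ζ
      simpa using hmem
    have he1 : ‖η N ζ‖ ≤ 1 := a1 N hN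
    have he2 : ∀ n, n ≠ N → ‖η n ζ‖ ≤ ξ n := fun n hn =>
      a2 n fun hmem => Set.disjoint_left.mp (hdisj hn) hmem hN
    obtain ⟨s1, b1, -, -⟩ := aux_ptwise hC.le ξ hξ2 N (fun n => η n ζ) (fun n => φ n ζ)
      (fun n => ψ n ζ) (fun n => ψt t n ζ) he1 he2 a3 a4
    obtain ⟨s2, b2, -, -⟩ := aux_ptwise hC.le ξ hξ2 N (fun n => η n ζ) (fun n => φ n ζ)
      (fun n => ψ n ζ) (fun n => ψ n ζ) he1 he2 a3 (fun n => le_rfl)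
    obtain ⟨s3, b3, b4⟩ := aux_diff hC.le ξ hξ2 N (fun n => η n ζ) (fun n => φ n ζ)
      (fun n => ψ n ζ) (fun n => ψt t n ζ) he1 he2 a3 a4
    exact ⟨s1, s2, b1, b2, s3, b3, b4⟩
  refine ⟨⟨C * (1 + ∑' n, ξ n ^ 2), fun t ht => (key t ht).mono fun ζ h => h.2.2.1⟩, ?_⟩
  -- measurability
  have hmeas_t : ∀ t, 0 < t →
      AEStronglyMeasurable (fun ζ => ∑' n, (η n ζ) ^ 2 * (φ n ζ / ψt t n ζ)) μ := by
    intro t ht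
    refine aestronglyMeasurable_of_tendsto_ae atTop
      (f := fun k ζ => ∑ n ∈ Finset.range k, (η n ζ) ^ 2 * (φ n ζ / ψt t n ζ))
      (fun k => (Finset.measurable_sum (f := fun n ζ => (η n ζ) ^ 2 * (φ n ζ / ψt t n ζ)) _ fun n _ =>
        ((hηm n).pow_const 2).mul ((hφm n).div (hψtm t n))).aestronglyMeasurable) ?_
    filter_upwards [key t ht] with ζ h using h.1.hasSum.tendsto_sum_nat
  have hmeas_s : AEStronglyMeasurable (fun ζ => ∑' n, (η n ζ) ^ 2 * (φ n ζ / ψ n ζ)) μ := by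
    refine aestronglyMeasurable_of_tendsto_ae atTop
      (f := fun k ζ => ∑ n ∈ Finset.range k, (η n ζ) ^ 2 * (φ n ζ / ψ n ζ))
      (fun k => (Finset.measurable_sum (f := fun n ζ => (η n ζ) ^ 2 * (φ n ζ / ψ n ζ)) _ fun n _ =>
        ((hηm n).pow_const 2).mul ((hφm n).div (hψm n))).aestronglyMeasurable) ?_
    filter_upwards [key 1 one_pos] with ζ h using h.2.1.hasSum.tendsto_sum_nat
  have hmeas_g : ∀ t, 0 < t →
      AEStronglyMeasurable (fun ζ => ∑' n, ‖η n ζ‖ ^ 2 * ‖ψ n ζ / ψt t n ζ - 1‖ ^ 2) μ := by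
    intro t ht
    refine aestronglyMeasurable_of_tendsto_ae atTop
      (f := fun k ζ => ∑ n ∈ Finset.range k, ‖η n ζ‖ ^ 2 * ‖ψ n ζ / ψt t n ζ - 1‖ ^ 2)
      (fun k => (Finset.measurable_sum (f := fun n ζ => ‖η n ζ‖ ^ 2 * ‖ψ n ζ / ψt t n ζ - 1‖ ^ 2) _ fun n _ =>
        ((hηm n).norm.pow_const 2).mul
          ((((hψm n).div (hψtm t n)).sub measurable_const).norm.pow_const 2)).aestronglyMeasurable)
      ?_
    filter_upwards [key t ht] with ζ h using h.2.2.2.2.1.hasSum.tendsto_sum_nat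
  -- integrability and per-n integral estimates
  have hr2int : ∀ t, 0 < t → ∀ n, Integrable (fun ζ => ‖ψ n ζ / ψt t n ζ - 1‖ ^ 2) μ := by
    intro t ht n
    refine Integrable.mono' (integrable_const (4 : ℝ))
      ((((hψm n).div (hψtm t n)).sub measurable_const).norm.pow_const 2).aestronglyMeasurable ?_
    filter_upwards [hψt t ht n] with ζ a4
    rw [Real.norm_of_nonneg (by positivity)]
    have hr := r_le_two a4
    nlinarith [norm_nonneg (ψ n ζ / ψt t n ζ - 1)]
  have hIM : ∀ t, 0 < t → ∀ n,
      Integrable (fun ζ => ‖η n ζ‖ ^ 2 * ‖ψ n ζ / ψt t n ζ - 1‖ ^ 2) μ ∧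
      ∫ ζ, ‖η n ζ‖ ^ 2 * ‖ψ n ζ / ψt t n ζ - 1‖ ^ 2 ∂μ ≤
        4 * ((μ (τ n)).toReal + ξ n ^ 2 * (μ Set.univ).toReal) := by
    intro t ht n
    have hbint : Integrable (fun ζ => 4 * ((τ n).indicator (fun _ => (1 : ℝ)) ζ + ξ n ^ 2)) μ :=
      ((((integrable_const (1 : ℝ)).indicator (hτm n)).add (integrable_const _)).const_mul 4)
    have hble : ∀ᵐ ζ ∂μ, ‖η n ζ‖ ^ 2 * ‖ψ n ζ / ψt t n ζ - 1‖ ^ 2 ≤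
        4 * ((τ n).indicator (fun _ => (1 : ℝ)) ζ + ξ n ^ 2) := by
      filter_upwards [hη1 n, hη2 n, hψt t ht n] with ζ a1 a2 a4
      have hr := r_le_two a4
      have hrsq : ‖ψ n ζ / ψt t n ζ - 1‖ ^ 2 ≤ 4 := by
        nlinarith [norm_nonneg (ψ n ζ / ψt t n ζ - 1)]
      by_cases hmem : ζ ∈ τ n
      · rw [Set.indicator_of_mem hmem]
        have h1 : ‖η n ζ‖ ^ 2 ≤ 1 := by nlinarith [norm_nonneg (η n ζ), a1 hmem]
        nlinarith [sq_nonneg (ξ n), sq_nonneg (‖ψ n ζ / ψt t n ζ - 1‖),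
          mul_le_mul h1 hrsq (sq_nonneg _) zero_le_one]
      · rw [Set.indicator_of_notMem hmem]
        have h1 : ‖η n ζ‖ ^ 2 ≤ ξ n ^ 2 := pow_le_pow_left₀ (norm_nonneg _) (a2 hmem) 2
        nlinarith [sq_nonneg (‖η n ζ‖), sq_nonneg (ξ n),
          mul_le_mul h1 hrsq (sq_nonneg _) (sq_nonneg _)]
    have hint : Integrable (fun ζ => ‖η n ζ‖ ^ 2 * ‖ψ n ζ / ψt t n ζ - 1‖ ^ 2) μ := by
      refine Integrable.mono' hbint (((hηm n).norm.pow_const 2).mul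
        ((((hψm n).div (hψtm t n)).sub measurable_const).norm.pow_const 2)).aestronglyMeasurable ?_
      filter_upwards [hble] with ζ h
      rw [Real.norm_of_nonneg (by positivity)]
      exact h
    refine ⟨hint, ?_⟩
    calc ∫ ζ, ‖η n ζ‖ ^ 2 * ‖ψ n ζ / ψt t n ζ - 1‖ ^ 2 ∂μ
        ≤ ∫ ζ, 4 * ((τ n).indicator (fun _ => (1 : ℝ)) ζ + ξ n ^ 2) ∂μ :=
          integral_mono_ae hint hbint hble
      _ = 4 * ((μ (τ n)).toReal + ξ n ^ 2 * (μ Set.univ).toReal) := by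
          rw [integral_const_mul, integral_add ((integrable_const (1 : ℝ)).indicator (hτm n))
            (integrable_const _), integral_indicator_const (1 : ℝ) (hτm n), integral_const]
          simp [smul_eq_mul, mul_comm, measureReal_def]
  -- the main integral inequality
  have hineq : ∀ t, 0 < t →
      (∫ ζ, ‖(∑' n, (η n ζ) ^ 2 * (φ n ζ / ψt t n ζ)) -
          (∑' n, (η n ζ) ^ 2 * (φ n ζ / ψ n ζ))‖ ^ 2 ∂μ) ≤
        C ^ 2 * (1 + ∑' n, ξ n ^ 2) *
          ∑' n, ∫ ζ, ‖η n ζ‖ ^ 2 * ‖ψ n ζ / ψt t n ζ - 1‖ ^ 2 ∂μ := by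
    intro t ht
    have hInt1 : Integrable (fun ζ => ‖(∑' n, (η n ζ) ^ 2 * (φ n ζ / ψt t n ζ)) -
        (∑' n, (η n ζ) ^ 2 * (φ n ζ / ψ n ζ))‖ ^ 2) μ := by
      refine Integrable.mono' (integrable_const ((2 * (C * (1 + ∑' n, ξ n ^ 2))) ^ 2))
        ((continuous_pow 2).comp_aestronglyMeasurable ((hmeas_t t ht).sub hmeas_s).norm) ?_
      filter_upwards [key t ht] with ζ h
      rw [Real.norm_of_nonneg (by positivity)]
      have hb : ‖(∑' n, (η n ζ) ^ 2 * (φ n ζ / ψt t n ζ)) -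
          (∑' n, (η n ζ) ^ 2 * (φ n ζ / ψ n ζ))‖ ≤ 2 * (C * (1 + ∑' n, ξ n ^ 2)) := by
        refine (norm_sub_le _ _).trans ?_
        have := h.2.2.1
        have := h.2.2.2.1
        linarith
      exact pow_le_pow_left₀ (norm_nonneg _) hb 2
    have hIntg : Integrable (fun ζ => ∑' n, ‖η n ζ‖ ^ 2 * ‖ψ n ζ / ψt t n ζ - 1‖ ^ 2) μ := by
      refine Integrable.mono' (integrable_const (4 * (1 + ∑' n, ξ n ^ 2))) (hmeas_g t ht) ?_
      filter_upwards [key t ht] with ζ h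
      rw [Real.norm_of_nonneg (tsum_nonneg fun n => by positivity)]
      exact h.2.2.2.2.2.1
    have hf' : ∑' n, ∫⁻ ζ, ‖‖η n ζ‖ ^ 2 * ‖ψ n ζ / ψt t n ζ - 1‖ ^ 2‖₊ ∂μ ≠ ⊤ := by
      have hb : ∀ n, ∫⁻ ζ, ‖‖η n ζ‖ ^ 2 * ‖ψ n ζ / ψt t n ζ - 1‖ ^ 2‖₊ ∂μ ≤
          4 * μ (τ n) + ENNReal.ofReal (4 * ξ n ^ 2) * μ Set.univ := by
        intro n
        have hptw : ∀ᵐ ζ ∂μ, (‖‖η n ζ‖ ^ 2 * ‖ψ n ζ / ψt t n ζ - 1‖ ^ 2‖₊ : ENNReal) ≤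
            (τ n).indicator (fun _ => 4) ζ + ENNReal.ofReal (4 * ξ n ^ 2) := by
          filter_upwards [hη1 n, hη2 n, hψt t ht n] with ζ a1 a2 a4
          have hr := r_le_two a4
          have hrsq : ‖ψ n ζ / ψt t n ζ - 1‖ ^ 2 ≤ 4 := by
            nlinarith [norm_nonneg (ψ n ζ / ψt t n ζ - 1)]
          rw [← enorm_eq_nnnorm, ← ofReal_norm, Real.norm_of_nonneg (by positivity)]
          by_cases hmem : ζ ∈ τ n
          · rw [Set.indicator_of_mem hmem]
            refine le_trans ?_ le_self_add
            rw [show (4 : ENNReal) = ENNReal.ofReal (4 : ℝ) by norm_num]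
            refine ENNReal.ofReal_le_ofReal ?_
            have h1 : ‖η n ζ‖ ^ 2 ≤ 1 := by nlinarith [norm_nonneg (η n ζ), a1 hmem]
            nlinarith [mul_le_mul h1 hrsq (sq_nonneg _) zero_le_one]
          · rw [Set.indicator_of_notMem hmem]
            refine le_trans ?_ le_add_self
            refine ENNReal.ofReal_le_ofReal ?_
            have h1 : ‖η n ζ‖ ^ 2 ≤ ξ n ^ 2 := pow_le_pow_left₀ (norm_nonneg _) (a2 hmem) 2
            nlinarith [mul_le_mul h1 hrsq (sq_nonneg _) (sq_nonneg _)]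
        calc ∫⁻ ζ, ‖‖η n ζ‖ ^ 2 * ‖ψ n ζ / ψt t n ζ - 1‖ ^ 2‖₊ ∂μ
            ≤ ∫⁻ ζ, ((τ n).indicator (fun _ => 4) ζ + ENNReal.ofReal (4 * ξ n ^ 2)) ∂μ :=
              lintegral_mono_ae hptw
          _ = 4 * μ (τ n) + ENNReal.ofReal (4 * ξ n ^ 2) * μ Set.univ := by
              rw [lintegral_add_right _ measurable_const,
                lintegral_indicator_const (hτm n), lintegral_const]
      refine ne_top_of_le_ne_top ?_ (ENNReal.tsum_le_tsum hb)
      rw [ENNReal.tsum_add, ENNReal.tsum_mul_left, ENNReal.tsum_mul_right,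
        ← measure_iUnion hdisj hτm, hcover,
        ← ENNReal.ofReal_tsum_of_nonneg (fun n => by positivity) (hξ2.mul_left 4)]
      exact ENNReal.add_ne_top.mpr ⟨ENNReal.mul_ne_top (by norm_num) (measure_ne_top μ _),
        ENNReal.mul_ne_top ENNReal.ofReal_ne_top (measure_ne_top μ _)⟩
    calc (∫ ζ, ‖(∑' n, (η n ζ) ^ 2 * (φ n ζ / ψt t n ζ)) -
          (∑' n, (η n ζ) ^ 2 * (φ n ζ / ψ n ζ))‖ ^ 2 ∂μ)
        ≤ ∫ ζ, C ^ 2 * (1 + ∑' n, ξ n ^ 2) *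
            ∑' n, ‖η n ζ‖ ^ 2 * ‖ψ n ζ / ψt t n ζ - 1‖ ^ 2 ∂μ :=
          integral_mono_ae hInt1 (hIntg.const_mul _)
            ((key t ht).mono fun ζ h => h.2.2.2.2.2.2)
      _ = C ^ 2 * (1 + ∑' n, ξ n ^ 2) *
            ∫ ζ, ∑' n, ‖η n ζ‖ ^ 2 * ‖ψ n ζ / ψt t n ζ - 1‖ ^ 2 ∂μ := integral_const_mul _ _
      _ = C ^ 2 * (1 + ∑' n, ξ n ^ 2) *
            ∑' n, ∫ ζ, ‖η n ζ‖ ^ 2 * ‖ψ n ζ / ψt t n ζ - 1‖ ^ 2 ∂μ := by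
          rw [integral_tsum (f := fun n ζ => ‖η n ζ‖ ^ 2 * ‖ψ n ζ / ψt t n ζ - 1‖ ^ 2) (fun n => (((hηm n).norm.pow_const 2).mul
            ((((hψm n).div (hψtm t n)).sub measurable_const).norm.pow_const
              2)).aestronglyMeasurable) hf']
  -- convergence of the series of integrals
  have hMsum : Summable (fun n => 4 * ((μ (τ n)).toReal + ξ n ^ 2 * (μ Set.univ).toReal)) := by
    refine Summable.mul_left 4 (Summable.add ?_ (hξ2.mul_right _))
    refine ENNReal.summable_toReal ?_
    rw [← measure_iUnion hdisj hτm]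
    exact measure_ne_top μ _
  have hI0 : ∀ n, Tendsto (fun t => ∫ ζ, ‖η n ζ‖ ^ 2 * ‖ψ n ζ / ψt t n ζ - 1‖ ^ 2 ∂μ)
      (𝓝[>] (0 : ℝ)) (𝓝 0) := by
    intro n
    refine squeeze_zero'
      (g := fun t => (1 + ξ n ^ 2) * ∫ ζ, ‖ψ n ζ / ψt t n ζ - 1‖ ^ 2 ∂μ)
      (Eventually.of_forall fun t => integral_nonneg fun ζ => by positivity)
      (eventually_of_mem self_mem_nhdsWithin fun t ht => ?_) ?_
    · have ht' : (0 : ℝ) < t := ht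
      have hmono : ∀ᵐ ζ ∂μ, ‖η n ζ‖ ^ 2 * ‖ψ n ζ / ψt t n ζ - 1‖ ^ 2 ≤
          (1 + ξ n ^ 2) * ‖ψ n ζ / ψt t n ζ - 1‖ ^ 2 := by
        filter_upwards [hη1 n, hη2 n] with ζ a1 a2
        have h1 : ‖η n ζ‖ ^ 2 ≤ 1 + ξ n ^ 2 := by
          by_cases hmem : ζ ∈ τ n
          · nlinarith [norm_nonneg (η n ζ), a1 hmem, sq_nonneg (ξ n)]
          · nlinarith [pow_le_pow_left₀ (norm_nonneg (η n ζ)) (a2 hmem) 2]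
        exact mul_le_mul_of_nonneg_right h1 (sq_nonneg _)
      calc (∫ ζ, ‖η n ζ‖ ^ 2 * ‖ψ n ζ / ψt t n ζ - 1‖ ^ 2 ∂μ)
          ≤ ∫ ζ, (1 + ξ n ^ 2) * ‖ψ n ζ / ψt t n ζ - 1‖ ^ 2 ∂μ :=
            integral_mono_ae (hIM t ht' n).1 ((hr2int t ht' n).const_mul _) hmono
        _ = (1 + ξ n ^ 2) * ∫ ζ, ‖ψ n ζ / ψt t n ζ - 1‖ ^ 2 ∂μ := integral_const_mul _ _
    · have := (hconv n).const_mul (1 + ξ n ^ 2)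
      simpa using this
  have hts : Tendsto (fun t => ∑' n, ∫ ζ, ‖η n ζ‖ ^ 2 * ‖ψ n ζ / ψt t n ζ - 1‖ ^ 2 ∂μ)
      (𝓝[>] (0 : ℝ)) (𝓝 0) := by
    have h := tendsto_tsum_of_dominated_convergence (𝓕 := 𝓝[>] (0 : ℝ))
      (f := fun t n => ∫ ζ, ‖η n ζ‖ ^ 2 * ‖ψ n ζ / ψt t n ζ - 1‖ ^ 2 ∂μ)
      (g := fun _ => (0 : ℝ)) hMsum hI0
      (eventually_of_mem self_mem_nhdsWithin fun t ht n => by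
        have ht' : (0 : ℝ) < t := ht
        rw [Real.norm_of_nonneg (integral_nonneg fun ζ => by positivity)]
        exact (hIM t ht' n).2)
    simpa using h
  refine squeeze_zero' (Eventually.of_forall fun t => integral_nonneg fun ζ => by positivity)
    (eventually_of_mem self_mem_nhdsWithin fun t ht => hineq t ht) ?_
  have := hts.const_mul (C ^ 2 * (1 + ∑' n, ξ n ^ 2))
  simpa using this
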